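/- The language L_Eq = {w ∈ {a,b}* : |w|_a = |w|_b} (words with an equal number of a's and b's) is not counting-regular: there is no regular language L' over any finite alphabet with f_{L'}(n) = f_{L_Eq}(n) for all n. -/

import Mathlib

/-- The counting function of a language: the number of words of length `n`. -/
noncomputable def countFn {α : Type*} (L : Set (List α)) (n : ℕ) : ℕ :=
  Set.ncard {w | w ∈ L ∧ w.length = n}

/-- A language is regular if it is accepted by a DFA with finitely many states. -/
def IsRegularLang {α : Type*} (L : Set (List α)) : Prop :=
  ∃ (σ : Type) (_ : Fintype σ) (M : DFA α σ), ∀ w, w ∈ M.accepts ↔ w ∈ L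

/-- A language is counting-regular if some regular language over a (possibly different)
finite alphabet has the same counting function. -/
def CountingRegular {α : Type*} (L : Set (List α)) : Prop :=
  ∃ (β : Type) (_ : Fintype β) (L' : Set (List β)),
    IsRegularLang L' ∧ ∀ n, countFn L' n = countFn L n

/-! ### Auxiliary: Finset of words of a given length -/

noncomputable def wordsLen (β : Type*) [Fintype β] (n : ℕ) : Finset (List β) :=
  (List.finite_length_eq β n).toFinset

lemma mem_wordsLen {β : Type*} [Fintype β] {n : ℕ} {w : List β} :
    w ∈ wordsLen β n ↔ w.length = n := by
  simp [wordsLen]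

/-! ### Counting words with equal letter counts -/

noncomputable def En (n m : ℕ) : Finset (List (Fin 2)) :=
  (wordsLen (Fin 2) n).filter (fun w => w.count 1 = m)

lemma mem_En {n m : ℕ} {w : List (Fin 2)} :
    w ∈ En n m ↔ w.length = n ∧ w.count 1 = m := by
  simp [En, mem_wordsLen]

lemma card_En : ∀ n m, (En n m).card = n.choose m := by
  intro n
  induction n with
  | zero =>
    intro m
    cases m with
    | zero =>
      have : En 0 0 = {([] : List (Fin 2))} := by
        ext w
        simp [mem_En, List.length_eq_zero_iff]
        rintro rfl; simp
      rw [this]; simp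
    | succ m =>
      have : En 0 (m+1) = ∅ := by
        ext w
        simp [mem_En, List.length_eq_zero_iff]
        rintro rfl; simp
      rw [this]; simp
  | succ n ih =>
    intro m
    cases m with
    | zero =>
      have : En (n+1) 0 = (En n 0).image ((0 : Fin 2) :: ·) := by
        ext w
        simp only [mem_En, Finset.mem_image]
        constructor
        · rintro ⟨h1, h2⟩
          cases w with
          | nil => simp at h1
          | cons a t =>
            fin_cases a
            · exact ⟨t, ⟨by simpa using h1, by simpa [List.count_cons] using h2⟩, rfl⟩
            · exfalso; simp [List.count_cons] at h2
        · rintro ⟨t, ⟨h1, h2⟩, rfl⟩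
          exact ⟨by simp [h1], by simp [List.count_cons, h2]⟩
      rw [this, Finset.card_image_of_injective _ List.cons_injective, ih 0]
      simp
    | succ m =>
      have hdecomp : En (n+1) (m+1)
          = (En n (m+1)).image ((0 : Fin 2) :: ·) ∪ (En n m).image ((1 : Fin 2) :: ·) := by
        ext w
        simp only [mem_En, Finset.mem_union, Finset.mem_image]
        constructor
        · rintro ⟨h1, h2⟩
          cases w with
          | nil => simp at h1
          | cons a t =>
            fin_cases a
            · exact Or.inl ⟨t, ⟨by simpa using h1,
                by simpa [List.count_cons] using h2⟩, rfl⟩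
            · refine Or.inr ⟨t, ⟨by simpa using h1, ?_⟩, rfl⟩
              simp [List.count_cons] at h2
              omega
        · rintro (⟨t, ⟨h1, h2⟩, rfl⟩ | ⟨t, ⟨h1, h2⟩, rfl⟩)
          · exact ⟨by simp [h1], by simp [List.count_cons, h2]⟩
          · exact ⟨by simp [h1], by simp [List.count_cons, h2]⟩
      have hdisj : Disjoint ((En n (m+1)).image ((0 : Fin 2) :: ·))
          ((En n m).image ((1 : Fin 2) :: ·)) := by
        rw [Finset.disjoint_left]
        rintro w hw1 hw2
        obtain ⟨t1, _, rfl⟩ := Finset.mem_image.1 hw1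
        obtain ⟨t2, _, heq⟩ := Finset.mem_image.1 hw2
        have : (1 : Fin 2) = 0 := (List.cons.injEq _ _ _ _ ▸ heq).1
        simp at this
      rw [hdecomp, Finset.card_union_of_disjoint hdisj,
        Finset.card_image_of_injective _ List.cons_injective,
        Finset.card_image_of_injective _ List.cons_injective, ih, ih]
      have := Nat.choose_succ_succ n m
      simp only [Nat.succ_eq_add_one] at this
      omega

lemma count01 (w : List (Fin 2)) : w.count 0 + w.count 1 = w.length := by
  induction w with
  | nil => simp
  | cons a t ih =>
    fin_cases a <;> simp [List.count_cons] <;> omega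

lemma countFn_eq_even (m : ℕ) :
    countFn {w : List (Fin 2) | w.count 0 = w.count 1} (2*m) = (2*m).choose m := by
  have hset : {w : List (Fin 2) | w ∈ {w : List (Fin 2) | w.count 0 = w.count 1}
      ∧ w.length = 2*m} = ↑(En (2*m) m) := by
    ext w
    simp only [Set.mem_setOf_eq, Finset.coe_sort_coe, Finset.mem_coe, mem_En]
    have := count01 w
    constructor
    · rintro ⟨h1, h2⟩; omega
    · rintro ⟨h1, h2⟩; omega
  rw [countFn, hset, Set.ncard_coe_finset, card_En]

lemma countFn_eq_odd (m : ℕ) :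
    countFn {w : List (Fin 2) | w.count 0 = w.count 1} (2*m+1) = 0 := by
  have hset : {w : List (Fin 2) | w ∈ {w : List (Fin 2) | w.count 0 = w.count 1}
      ∧ w.length = 2*m+1} = ∅ := by
    ext w
    simp only [Set.mem_setOf_eq, Set.mem_empty_iff_false, iff_false, not_and]
    intro h1 h2
    have := count01 w
    omega
  rw [countFn, hset, Set.ncard_empty]

/-! ### DFA counting: counts mod 3 are eventually periodic -/

noncomputable def Tf {β σ : Type} [Fintype β] (M : DFA β σ) (n : ℕ) (q : σ) :
    Finset (List β) :=
  @Finset.filter _ (fun w => M.evalFrom q w ∈ M.accept) (Classical.decPred _) (wordsLen β n)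

lemma mem_Tf {β σ : Type} [Fintype β] {M : DFA β σ} {n : ℕ} {q : σ} {w : List β} :
    w ∈ Tf M n q ↔ w.length = n ∧ M.evalFrom q w ∈ M.accept := by
  classical
  simp [Tf, mem_wordsLen]

lemma Tf_succ {β σ : Type} [Fintype β] (M : DFA β σ) (n : ℕ) (q : σ) :
    (Tf M (n+1) q).card = ∑ a : β, (Tf M n (M.step q a)).card := by
  classical
  have hdecomp : Tf M (n+1) q
      = Finset.univ.biUnion (fun a : β => (Tf M n (M.step q a)).image (a :: ·)) := by
    ext w
    simp only [Finset.mem_biUnion, Finset.mem_univ, true_and, Finset.mem_image, mem_Tf]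
    constructor
    · rintro ⟨h1, h2⟩
      cases w with
      | nil => simp at h1
      | cons a t =>
        exact ⟨a, t, ⟨by simpa using h1, by simpa [DFA.evalFrom] using h2⟩, rfl⟩
    · rintro ⟨a, t, ⟨h1, h2⟩, rfl⟩
      exact ⟨by simp [h1], by simpa [DFA.evalFrom] using h2⟩
  rw [hdecomp, Finset.card_biUnion]
  · exact Finset.sum_congr rfl fun a _ =>
      Finset.card_image_of_injective _ List.cons_injective
  · intro a _ b _ hab
    rw [Function.onFun, Finset.disjoint_left]
    rintro w hw1 hw2
    obtain ⟨t1, _, rfl⟩ := Finset.mem_image.1 hw1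
    obtain ⟨t2, _, heq⟩ := Finset.mem_image.1 hw2
    exact hab ((List.cons.injEq _ _ _ _ ▸ heq).1).symm

lemma iterate_eventually_periodic {γ : Type*} [Finite γ] (F : γ → γ) (x : γ) :
    ∃ N P, 0 < P ∧ ∀ n ≥ N, F^[n + P] x = F^[n] x := by
  obtain ⟨i, j, hne, heq⟩ := Finite.exists_ne_map_eq_of_infinite (fun n : ℕ => F^[n] x)
  have key : ∀ i j : ℕ, i < j → F^[i] x = F^[j] x →
      ∃ N P, 0 < P ∧ ∀ n ≥ N, F^[n + P] x = F^[n] x := by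
    intro i j hij h
    refine ⟨i, j - i, by omega, ?_⟩
    intro n hn
    obtain ⟨t, rfl⟩ : ∃ t, n = i + t := ⟨n - i, by omega⟩
    have h1 : i + t + (j - i) = t + j := by omega
    rw [h1, Function.iterate_add_apply, ← h, ← Function.iterate_add_apply, Nat.add_comm t i]
  rcases Ne.lt_or_gt hne with hlt | hlt
  · exact key i j hlt heq
  · exact key j i hlt heq.symm

lemma dfa_count_periodic {β σ : Type} [Fintype β] [Fintype σ] (M : DFA β σ) :
    ∃ N P, 0 < P ∧ ∀ n ≥ N,
      ((countFn M.accepts (n + P) : ZMod 3)) = (countFn M.accepts n : ZMod 3) := by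
  classical
  set u : ℕ → σ → ZMod 3 := fun n q => ((Tf M n q).card : ZMod 3) with hu_def
  set F : (σ → ZMod 3) → (σ → ZMod 3) := fun v q => ∑ a : β, v (M.step q a) with hF_def
  have hstep : ∀ n, u (n+1) = F (u n) := by
    intro n
    funext q
    simp only [hu_def, hF_def, Tf_succ M n q, Nat.cast_sum]
  have hiter : ∀ n, u n = F^[n] (u 0) := by
    intro n
    induction n with
    | zero => simp
    | succ n ih => rw [Function.iterate_succ_apply', ← ih, hstep]
  have hcount : ∀ n, (countFn M.accepts n : ZMod 3) = u n M.start := by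
    intro n
    have hset : {w | w ∈ M.accepts ∧ w.length = n} = ↑(Tf M n M.start) := by
      ext w
      simp only [Set.mem_setOf_eq, Finset.mem_coe, mem_Tf, DFA.mem_accepts]
      tauto
    simp only [hu_def, countFn, hset, Set.ncard_coe_finset]
    rw [← Set.ncard_coe_finset, ← hset]
    rfl
  obtain ⟨N, P, hP, hper⟩ := iterate_eventually_periodic F (u 0)
  refine ⟨N, P, hP, fun n hn => ?_⟩
  rw [hcount (n + P), hcount n, hiter (n + P), hiter n]
  exact congrFun (hper n hn) M.start

/-! ### Arithmetic facts about central binomial coefficients mod 3 -/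

lemma central_pow_three_mod (k : ℕ) : (2 * 3^k).choose (3^k) ≡ 2 [MOD 3] := by
  haveI : Fact (Nat.Prime 3) := ⟨by norm_num⟩
  induction k with
  | zero => decide
  | succ k ih =>
    have h := Choose.choose_modEq_choose_mod_mul_choose_div_nat
      (n := 2 * 3^(k+1)) (k := 3^(k+1)) (p := 3)
    have e0 : (3:ℕ)^(k+1) = 3 * 3^k := by ring
    have e1 : 2 * 3^(k+1) % 3 = 0 := by
      rw [e0]; omega
    have e2 : (3:ℕ)^(k+1) % 3 = 0 := by rw [e0]; omega
    have e3 : 2 * 3^(k+1) / 3 = 2 * 3^k := by rw [e0]; omega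
    have e4 : (3:ℕ)^(k+1) / 3 = 3^k := by rw [e0]; omega
    rw [e1, e2, e3, e4] at h
    have h' : (2 * 3^(k+1)).choose (3^(k+1)) ≡ (2 * 3^k).choose (3^k) [MOD 3] := by
      simpa using h
    exact h'.trans ih

lemma three_dvd_central {m k : ℕ} (hk : 1 ≤ k) (h1 : m < 3^k) (h2 : 3^k ≤ 2*m) :
    3 ∣ (2*m).choose m := by
  have hp : Nat.Prime 3 := by norm_num
  have hkn : m ≤ 2*m := by omega
  have hnb : Nat.log 3 (2*m) < 2*m + 1 := Nat.lt_succ_of_le (Nat.log_le_self _ _)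
  have hmul := hp.emultiplicity_choose hkn hnb
  have hmem : k ∈ (Finset.Ico 1 (2*m+1)).filter
      (fun i => 3 ^ i ≤ m % 3 ^ i + (2*m - m) % 3 ^ i) := by
    have hk2 : k < 3^k := Nat.lt_pow_self (n := k) (by norm_num)
    have hmod : m % 3^k = m := Nat.mod_eq_of_lt h1
    have hsub : 2*m - m = m := by omega
    rw [Finset.mem_filter, Finset.mem_Ico]
    refine ⟨⟨hk, by omega⟩, ?_⟩
    rw [hsub, hmod]
    omega
  have hcard : 1 ≤ ((Finset.Ico 1 (2*m+1)).filter
      (fun i => 3 ^ i ≤ m % 3 ^ i + (2*m - m) % 3 ^ i)).card :=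
    Finset.card_pos.2 ⟨k, hmem⟩
  have : (1 : ℕ∞) ≤ emultiplicity 3 ((2*m).choose m) := by
    rw [hmul]
    exact_mod_cast hcard
  simpa using pow_dvd_of_le_emultiplicity (k := 1) this

/-- The language of words over `{a, b}` (here `{0, 1}`) with equally many `a`'s and `b`'s
is not counting-regular. -/
theorem stmt1 : ¬ CountingRegular {w : List (Fin 2) | w.count 0 = w.count 1} := by
  rintro ⟨β, hβ, L', ⟨σ, hσ, M, hM⟩, hcount⟩
  haveI := hβ; haveI := hσ
  have hL'eq : ∀ n, countFn M.accepts n = countFn L' n := by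
    intro n
    have : {w | w ∈ M.accepts ∧ w.length = n} = {w | w ∈ L' ∧ w.length = n} := by
      ext w; simp only [Set.mem_setOf_eq, hM w]
    unfold countFn; exact congrArg Set.ncard this
  obtain ⟨N, P, hP, hper⟩ := dfa_count_periodic M
  have key : ∀ n ≥ N,
      ((countFn {w : List (Fin 2) | w.count 0 = w.count 1} (n + P) : ZMod 3))
        = (countFn {w : List (Fin 2) | w.count 0 = w.count 1} n : ZMod 3) := by
    intro n hn
    have := hper n hn
    rwa [hL'eq, hL'eq, hcount, hcount] at this
  have hA : ∀ k, ((2 * 3^k).choose (3^k) : ZMod 3) = 2 := by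
    intro k
    have := (ZMod.natCast_eq_natCast_iff _ _ 3).2 (central_pow_three_mod k)
    simpa using this
  rcases Nat.even_or_odd P with hPe | hPo
  · -- even period P = 2q, q ≥ 1
    obtain ⟨q, rfl⟩ := hPe
    have hq : 1 ≤ q := by omega
    set k : ℕ := q + q + N + 1 with hk_def
    have hk1 : 1 ≤ k := by omega
    have hkpow : k < 3^k := Nat.lt_pow_self (n := k) (by norm_num)
    set m : ℕ := 3^k - q with hm_def
    have hm1 : m < 3^k := by
      have : 0 < (3:ℕ)^k := Nat.pow_pos (by norm_num)
      omega
    have hm2 : 3^k ≤ 2*m := by omega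
    have hmq : m + q = 3^k := by omega
    have hn : 2*m ≥ N := by omega
    have h1 := key (2*m) hn
    have e1 : 2*m + (q + q) = 2 * 3^k := by omega
    rw [e1] at h1
    rw [countFn_eq_even m, countFn_eq_even (3^k)] at h1
    have h2 : (((2*m).choose m : ℕ) : ZMod 3) = 0 :=
      (ZMod.natCast_eq_zero_iff _ _).2 (three_dvd_central hk1 hm1 hm2)
    rw [hA k, h2] at h1
    exact absurd h1 (by decide)
  · -- odd period P = 2q+1
    obtain ⟨q, rfl⟩ := hPo
    set k : ℕ := N with hk_def
    have hkpow : k ≤ 3^k := (Nat.lt_pow_self (n := k) (by norm_num)).le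
    have hn : 2*3^k ≥ N := by omega
    have h1 := key (2*3^k) hn
    have e1 : 2*3^k + (2*q+1) = 2*(3^k + q) + 1 := by ring
    rw [e1, countFn_eq_odd (3^k + q), countFn_eq_even (3^k)] at h1
    rw [hA k] at h1
    exact absurd h1 (by decide)
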